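/- The Rice polynomials H_n(ξ,p;v) = ∑_{j=0}^n (-n)_j (n+1)_j (ξ)_j / (j!^2 (p)_j) v^j satisfy the generating function identity ∑_{n=0}^∞ t^n H_n(ξ,p;v) = (1-t)^{-1} F(ξ, 1/2; p; -4vt(1-t)^{-2}) for all complex t, v with |t| and |v| small enough that both sides converge. -/

import Mathlib

open Complex MeasureTheory Real

noncomputable def poch (x : ℂ) (n : ℕ) : ℂ := (ascPochhammer ℂ n).eval x

noncomputable def hyp (a b c z : ℂ) : ℂ :=
  ∑' k : ℕ, poch a k * poch b k / ((k.factorial : ℂ) * poch c k) * z ^ k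

noncomputable def riceH (n : ℕ) (ξ p v : ℂ) : ℂ :=
  ∑ j ∈ Finset.range (n + 1),
    poch (-(n : ℂ)) j * poch ((n : ℂ) + 1) j * poch ξ j /
      (((j.factorial : ℂ)) ^ 2 * poch p j) * v ^ j

lemma poch_zero (x : ℂ) : poch x 0 = 1 := by simp [poch]

lemma poch_succ (x : ℂ) (n : ℕ) : poch x (n + 1) = poch x n * (x + n) := by
  simp [poch, ascPochhammer_succ_right]

lemma poch_ne_zero {p : ℂ} (hp : ∀ m : ℕ, p ≠ -(m : ℂ)) (n : ℕ) : poch p n ≠ 0 := by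
  induction n with
  | zero => simp [poch_zero]
  | succ n ih =>
      rw [poch_succ]
      refine mul_ne_zero ih ?_
      intro h
      exact hp n (by linear_combination h)

lemma poch_half (k : ℕ) :
    poch (1 / 2) k * ((4 : ℂ) ^ k * (k.factorial : ℂ)) = ((2 * k).factorial : ℂ) := by
  induction k with
  | zero => simp [poch_zero]
  | succ k ih =>
      rw [poch_succ]
      have h2 : 2 * (k + 1) = (2 * k + 1) + 1 := by ring
      rw [h2, Nat.factorial_succ, Nat.factorial_succ, Nat.factorial_succ]
      push_cast
      linear_combination (2 * (k:ℂ) + 1) * (2 * (k:ℂ) + 2) / 4 * ih * 4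

lemma poch_neg_mul (n : ℕ) : ∀ j : ℕ, j ≤ n →
    poch (-(n : ℂ)) j * poch ((n : ℂ) + 1) j * ((n - j).factorial : ℂ)
      = (-1) ^ j * ((n + j).factorial : ℂ) := by
  intro j
  induction j with
  | zero => simp [poch_zero]
  | succ j ih =>
      intro hj
      have hj' : j ≤ n := by omega
      have IH := ih hj'
      have hsub : n - j = (n - (j + 1)) + 1 := by omega
      have hadd : n + (j + 1) = (n + j) + 1 := by omega
      have hnz : ((n : ℂ) - j) ≠ 0 := by
        intro h
        have : (n : ℂ) = j := by linear_combination h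
        have := Nat.cast_injective (R := ℂ) this
        omega
      apply mul_right_cancel₀ hnz
      rw [poch_succ, poch_succ, hadd, Nat.factorial_succ]
      rw [hsub, Nat.factorial_succ] at IH
      have hc : ((n - (j+1) + 1 : ℕ) : ℂ) = (n : ℂ) - j := by
        have : n - (j+1) + 1 = n - j := by omega
        rw [this, Nat.cast_sub hj']
      rw [Nat.cast_mul, hc] at IH
      push_cast
      linear_combination (-((n:ℂ)) + j) * ((n:ℂ) + 1 + j) * IH

noncomputable def cRice (ξ p v : ℂ) (j : ℕ) : ℂ :=
  (-1)^j * poch ξ j * v^j / ((j.factorial : ℂ)^2 * poch p j)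

noncomputable def GRice (ξ p v t : ℂ) (q : ℕ × ℕ) : ℂ :=
  cRice ξ p v q.1 * (((q.2 + 2*q.1).choose (2*q.1) : ℕ) : ℂ) *
    (((2*q.1).factorial : ℕ) : ℂ) * t^(q.1 + q.2)

lemma GRice_term (ξ p v t : ℂ) (n j : ℕ) (hjn : j ≤ n) :
    GRice ξ p v t (j, n - j) =
      t^n * (poch (-(n : ℂ)) j * poch ((n : ℂ) + 1) j * poch ξ j /
        (((j.factorial : ℂ)) ^ 2 * poch p j) * v ^ j) := by
  have key : ((-1:ℂ))^j * (((n+j).choose (2*j) : ℕ) : ℂ) * (((2*j).factorial : ℕ) : ℂ)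
      = poch (-(n:ℂ)) j * poch ((n:ℂ)+1) j := by
    have h3 := poch_neg_mul n j hjn
    have h4 : (n+j).choose (2*j) * (2*j).factorial * (n-j).factorial = (n+j).factorial := by
      have h5 := Nat.choose_mul_factorial_mul_factorial (show 2*j ≤ n+j by omega)
      rwa [show n+j-2*j = n-j by omega] at h5
    have hfnz : ((n-j).factorial : ℂ) ≠ 0 := Nat.cast_ne_zero.2 (Nat.factorial_ne_zero _)
    apply mul_right_cancel₀ hfnz
    rw [h3, ← h4]
    push_cast
    ring
  have hidx1 : (n - j) + 2*j = n + j := by omega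
  have hidx2 : j + (n - j) = n := by omega
  rw [GRice, cRice]
  simp only [hidx1, hidx2]
  linear_combination (t^n * poch ξ j * v^j / (((j.factorial : ℂ))^2 * poch p j)) * key

lemma hyp_term (ξ p v t : ℂ) (j : ℕ) (h1t : (1:ℂ) - t ≠ 0) (hpp : poch p j ≠ 0) :
    cRice ξ p v j * ((2*j).factorial : ℂ) * t^j * (1/(1-t)^(2*j+1))
      = (1-t)⁻¹ * (poch ξ j * poch (1/2) j / ((j.factorial : ℂ) * poch p j)
        * (-4 * v * t * ((1 - t) ^ 2)⁻¹)^j) := by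
  have hfac : ((j.factorial : ℂ)) ≠ 0 := Nat.cast_ne_zero.2 (Nat.factorial_ne_zero j)
  have ph : poch (1/2) j = ((2*j).factorial : ℂ) / ((4:ℂ)^j * (j.factorial : ℂ)) := by
    rw [eq_div_iff (mul_ne_zero (pow_ne_zero _ (by norm_num)) hfac)]
    exact poch_half j
  have hz : (-4 * v * t * ((1 - t) ^ 2)⁻¹)^j
      = (-1:ℂ)^j * 4^j * v^j * t^j * ((1-t)^(2*j))⁻¹ := by
    rw [show (-4 * v * t * ((1 - t) ^ 2)⁻¹) = ((-1) * 4) * v * t * ((1-t)^2)⁻¹ by ring]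
    rw [mul_pow, mul_pow, mul_pow, mul_pow, inv_pow, ← pow_mul]
  have hpw : ((1:ℂ)-t)^(2*j+1) = (1-t)^(2*j) * (1-t) := pow_succ _ _
  have hnz2 : ((1:ℂ)-t)^(2*j) ≠ 0 := pow_ne_zero _ h1t
  have h4nz : ((4:ℂ))^j ≠ 0 := pow_ne_zero _ (by norm_num)
  rw [cRice, ph, hz, hpw]
  field_simp [h1t, hfac, hpp, hnz2, h4nz]

lemma cRice_rec (ξ p v : ℂ) (j : ℕ) (hpj : p + (j:ℂ) ≠ 0) (hpp : poch p j ≠ 0) :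
    cRice ξ p v (j+1) * (((j:ℂ)+1)^2 * (p + (j:ℂ))) = cRice ξ p v j * (-(ξ + (j:ℂ))) * v := by
  have hfac : ((j.factorial : ℂ)) ≠ 0 := Nat.cast_ne_zero.2 (Nat.factorial_ne_zero j)
  have hj1 : ((j:ℂ)+1) ≠ 0 := by
    have := Nat.cast_add_one_ne_zero (R := ℂ) j
    push_cast at this
    exact this
  rw [cRice, cRice, poch_succ ξ, poch_succ p, Nat.factorial_succ,
    pow_succ ((-1:ℂ)) j, pow_succ v j]
  push_cast
  field_simp

lemma norm_cRice_rec (ξ p v : ℂ) (j : ℕ) (hpj : p + (j:ℂ) ≠ 0) (hpp : poch p j ≠ 0) :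
    ‖cRice ξ p v (j+1)‖ =
      ‖cRice ξ p v j‖ * ‖ξ + (j:ℂ)‖ * ‖v‖ / (((j:ℝ)+1)^2 * ‖p + (j:ℂ)‖) := by
  have hPpos : 0 < ‖p + (j:ℂ)‖ := norm_pos_iff.2 hpj
  rw [eq_div_iff (by positivity)]
  have h := congrArg norm (cRice_rec ξ p v j hpj hpp)
  simp only [norm_mul, norm_pow, norm_neg] at h
  rw [show ‖(j:ℂ)+1‖ = (j:ℝ)+1 by
    rw [show ((j:ℂ)+1) = ((j+1 : ℕ) : ℂ) by push_cast; ring, Complex.norm_natCast]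
    push_cast; ring] at h
  linarith [h]

lemma ratio_aux (X P T Q vn jr : ℝ) (hX : X ≤ 2*(jr+1)) (hXn : 0 ≤ X) (hP : (jr+1)/2 ≤ P)
    (hPpos : 0 < P) (hT : 0 ≤ T) (hvn : 0 ≤ vn) (hvT : (vn+1)*T ≤ 1/128)
    (hQ : 0 ≤ Q) (hQ2 : Q ≤ 2) (hj : 0 ≤ jr) :
    X * vn * ((2*jr+1)*(2*jr+2)) * T * Q^2 / ((jr+1)^2 * P) ≤ 1/2 := by
  rw [div_le_iff₀ (by positivity)]
  have h1 : X * vn * ((2*jr+1)*(2*jr+2)) * T * Q^2 ≤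
      (2*(jr+1)) * vn * ((2*(jr+1))*(2*(jr+1))) * T * 4 := by
    have hQ4 : Q^2 ≤ 4 := by nlinarith
    have h2 : (2*jr+1)*(2*jr+2) ≤ (2*(jr+1))*(2*(jr+1)) := by nlinarith
    have hb1 : X * vn * ((2*jr+1)*(2*jr+2)) * T * Q^2
        ≤ X * vn * ((2*jr+1)*(2*jr+2)) * T * 4 := by
      apply mul_le_mul_of_nonneg_left hQ4
      positivity
    have hb2 : X * vn * ((2*jr+1)*(2*jr+2)) * T * 4
        ≤ (2*(jr+1)) * vn * ((2*(jr+1))*(2*(jr+1))) * T * 4 := by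
      have : X * ((2*jr+1)*(2*jr+2)) ≤ (2*(jr+1)) * ((2*(jr+1))*(2*(jr+1))) := by
        apply mul_le_mul hX h2 (by positivity) (by positivity)
      nlinarith [mul_nonneg hvn hT]
    linarith
  have h3 : (2*(jr+1)) * vn * ((2*(jr+1))*(2*(jr+1))) * T * 4 = 32*(jr+1)^3*(vn*T) := by ring
  have h4 : vn * T ≤ 1/128 := by nlinarith
  have h5 : 32*(jr+1)^3*(vn*T) ≤ 32*(jr+1)^3*(1/128) := by
    apply mul_le_mul_of_nonneg_left h4 (by positivity)
  have h7 : (1/4:ℝ)*(jr+1)^3 ≤ 1/2 * ((jr+1)^2 * P) := by nlinarith [sq_nonneg (jr+1)]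
  nlinarith

noncomputable def DRice (ξ p v : ℂ) (T : ℝ) (j : ℕ) : ℝ :=
  ‖cRice ξ p v j‖ * ((2*j).factorial : ℝ) * T^j * (1/(1-T)^(2*j+1))

lemma DRice_step (ξ p v : ℂ) (T : ℝ) (j : ℕ)
    (hT0 : 0 ≤ T) (hT2 : T < 1/2) (hvT : (‖v‖+1)*T ≤ 1/128)
    (hxj : ‖ξ‖ ≤ (j:ℝ)) (hpj2 : 2*‖p‖+1 ≤ (j:ℝ))
    (hpj : p + (j:ℂ) ≠ 0) (hpp : poch p j ≠ 0) :
    DRice ξ p v T (j+1) ≤ (1/2) * DRice ξ p v T j := by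
  have h1T : (0:ℝ) < 1 - T := by linarith
  set X := ‖ξ + (j:ℂ)‖ with hXd
  set P := ‖p + (j:ℂ)‖ with hPd
  set Q := 1/(1-T) with hQd
  have hQpos : 0 < Q := by rw [hQd]; positivity
  have hQ2 : Q ≤ 2 := by rw [hQd, div_le_iff₀ h1T]; linarith
  have hPpos : 0 < P := norm_pos_iff.2 hpj
  have hPge : ((j:ℝ)+1)/2 ≤ P := by
    have h6 : ‖(j:ℂ)‖ ≤ ‖p + (j:ℂ)‖ + ‖p‖ := by
      calc ‖(j:ℂ)‖ = ‖(p + (j:ℂ)) + (-p)‖ := by ring_nf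
      _ ≤ ‖p + (j:ℂ)‖ + ‖(-p)‖ := norm_add_le _ _
      _ = ‖p + (j:ℂ)‖ + ‖p‖ := by rw [norm_neg]
    rw [Complex.norm_natCast] at h6
    rw [hPd]
    linarith
  have hXle : X ≤ 2*((j:ℝ)+1) := by
    have h7 : X ≤ ‖ξ‖ + ‖(j:ℂ)‖ := norm_add_le _ _
    rw [Complex.norm_natCast] at h7
    linarith
  have hb := norm_cRice_rec ξ p v j hpj hpp
  have hfac : ((2*(j+1)).factorial : ℝ) =
      ((2*j).factorial : ℝ) * ((2*(j:ℝ)+1) * (2*(j:ℝ)+2)) := by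
    have h8 : 2*(j+1) = (2*j+1)+1 := by ring
    rw [h8, Nat.factorial_succ, Nat.factorial_succ]
    push_cast
    ring
  have hU : (1:ℝ)/(1-T)^(2*(j+1)+1) = (1/(1-T)^(2*j+1)) * Q^2 := by
    rw [hQd, show 2*(j+1)+1 = (2*j+1)+2 by ring, pow_add, div_pow, one_pow]
    field_simp
  have hDj1 : DRice ξ p v T (j+1) =
      (‖cRice ξ p v j‖ * ((2*j).factorial : ℝ) * T^j * (1/(1-T)^(2*j+1))) *
        (X * ‖v‖ * ((2*(j:ℝ)+1) * (2*(j:ℝ)+2)) * T * Q^2 / (((j:ℝ)+1)^2 * P)) := by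
    rw [DRice, hb, hfac, hU, pow_succ T j]
    rw [← hXd, ← hPd]
    ring
  have hratio := ratio_aux X P T Q ‖v‖ (j:ℝ) hXle (norm_nonneg _) hPge hPpos hT0
    (norm_nonneg v) hvT (le_of_lt hQpos) hQ2 (Nat.cast_nonneg j)
  calc DRice ξ p v T (j+1) = _ := hDj1
  _ ≤ (‖cRice ξ p v j‖ * ((2*j).factorial : ℝ) * T^j * (1/(1-T)^(2*j+1))) * (1/2) := by
      apply mul_le_mul_of_nonneg_left hratio
      have : (0:ℝ) < (1-T)^(2*j+1) := pow_pos h1T _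
      positivity
  _ = (1/2) * DRice ξ p v T j := by rw [DRice]; ring

theorem stmt_12 (ξ p v : ℂ) (hp : ∀ m : ℕ, p ≠ -(m : ℂ)) :
    ∃ ε > (0 : ℝ), ∀ t : ℂ, ‖t‖ < ε →
      ∑' n : ℕ, t ^ n * riceH n ξ p v =
        (1 - t)⁻¹ * hyp ξ (1 / 2) p (-4 * v * t * ((1 - t) ^ 2)⁻¹) := by
  refine ⟨min (1/2) ((128 * (‖v‖ + 1))⁻¹), by positivity, ?_⟩
  intro t ht
  have ht2 : ‖t‖ < 1/2 := lt_of_lt_of_le ht (min_le_left _ _)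
  have htv : ‖t‖ < (128 * (‖v‖ + 1))⁻¹ := lt_of_lt_of_le ht (min_le_right _ _)
  have ht1 : ‖t‖ < 1 := by linarith
  have htn : (0:ℝ) ≤ ‖t‖ := norm_nonneg t
  have h1T : (0:ℝ) < 1 - ‖t‖ := by linarith
  have h1t : (1 : ℂ) - t ≠ 0 := by
    intro h
    have : (1:ℂ) = t := by linear_combination h
    rw [← this] at ht1
    simp at ht1
  have hppj : ∀ j : ℕ, p + (j:ℂ) ≠ 0 := by
    intro j h
    exact hp j (by linear_combination h)
  have hppoch : ∀ j : ℕ, poch p j ≠ 0 := poch_ne_zero hp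
  have hvT : (‖v‖+1)*‖t‖ ≤ 1/128 := by
    have h10 : (0:ℝ) < ‖v‖+1 := by positivity
    have h11 := mul_le_mul_of_nonneg_left (le_of_lt htv) (le_of_lt h10)
    calc (‖v‖+1)*‖t‖ ≤ (‖v‖+1) * (128*(‖v‖+1))⁻¹ := h11
    _ = 1/128 := by field_simp
  -- rows in ℂ
  have hrow : ∀ j : ℕ, HasSum (fun m => GRice ξ p v t (j, m))
      (cRice ξ p v j * ((2*j).factorial : ℂ) * t^j * (1/(1-t)^(2*j+1))) := by
    intro j
    have key := (hasSum_choose_mul_geometric_of_norm_lt_one (𝕜 := ℂ) (2*j) ht1).mul_left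
      (cRice ξ p v j * ((2*j).factorial : ℂ) * t^j)
    have hfe : (fun m => cRice ξ p v j * ((2*j).factorial : ℂ) * t^j *
        ((((m + 2*j).choose (2*j) : ℕ) : ℂ) * t^m)) = fun m => GRice ξ p v t (j, m) := by
      funext m
      simp only [GRice]
      rw [pow_add]
      ring
    rwa [hfe] at key
  -- rows of norms
  have hTn : ‖(‖t‖ : ℝ)‖ < 1 := by rwa [Real.norm_eq_abs, _root_.abs_of_nonneg htn]
  have hnormG : ∀ j m : ℕ, ‖GRice ξ p v t (j, m)‖ =
      ‖cRice ξ p v j‖ * (((m + 2*j).choose (2*j) : ℕ) : ℝ) * (((2*j).factorial : ℕ) : ℝ)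
        * ‖t‖^(j+m) := by
    intro j m
    simp only [GRice, norm_mul, norm_pow, Complex.norm_natCast]
  have hrowN : ∀ j : ℕ, HasSum (fun m => ‖GRice ξ p v t (j, m)‖) (DRice ξ p v ‖t‖ j) := by
    intro j
    have key := (hasSum_choose_mul_geometric_of_norm_lt_one (𝕜 := ℝ) (2*j) hTn).mul_left
      (‖cRice ξ p v j‖ * ((2*j).factorial : ℝ) * ‖t‖^j)
    have hfe : (fun m => ‖cRice ξ p v j‖ * ((2*j).factorial : ℝ) * ‖t‖^j *
        ((((m + 2*j).choose (2*j) : ℕ) : ℝ) * ‖t‖^m)) =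
          fun m => ‖GRice ξ p v t (j, m)‖ := by
      funext m
      rw [hnormG j m, pow_add]
      ring
    rw [hfe] at key
    exact key
  have hDnonneg : ∀ j, 0 ≤ DRice ξ p v ‖t‖ j := by
    intro j
    have h12 : (0:ℝ) < (1-‖t‖)^(2*j+1) := pow_pos h1T _
    have h13 : (0:ℝ) ≤ 1/(1-‖t‖)^(2*j+1) := by positivity
    exact mul_nonneg (mul_nonneg (mul_nonneg (norm_nonneg _) (Nat.cast_nonneg _))
      (pow_nonneg htn _)) h13
  -- summability of D
  have hDsum : Summable (DRice ξ p v ‖t‖) := by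
    apply summable_of_ratio_norm_eventually_le (r := 1/2) (by norm_num)
    rw [Filter.eventually_atTop]
    refine ⟨⌈‖ξ‖⌉₊ + 2 * ⌈‖p‖⌉₊ + 2, fun j hj => ?_⟩
    rw [Real.norm_eq_abs, Real.norm_eq_abs, _root_.abs_of_nonneg (hDnonneg _),
      _root_.abs_of_nonneg (hDnonneg _)]
    have hxj : ‖ξ‖ ≤ (j:ℝ) := by
      have h14 : ⌈‖ξ‖⌉₊ ≤ j := by omega
      calc ‖ξ‖ ≤ (⌈‖ξ‖⌉₊ : ℝ) := Nat.le_ceil _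
      _ ≤ (j:ℝ) := Nat.cast_le.2 h14
    have hpj2 : 2*‖p‖+1 ≤ (j:ℝ) := by
      have h15 : 2 * ⌈‖p‖⌉₊ + 1 ≤ j := by omega
      have h16 : ((2 * ⌈‖p‖⌉₊ + 1 : ℕ) : ℝ) ≤ (j:ℝ) := Nat.cast_le.2 h15
      have h17 : ‖p‖ ≤ (⌈‖p‖⌉₊ : ℝ) := Nat.le_ceil _
      push_cast at h16
      linarith
    exact DRice_step ξ p v ‖t‖ j htn ht2 hvT hxj hpj2 (hppj j) (hppoch j)
  -- summability of G
  have hGnormsum : Summable (fun q : ℕ × ℕ => ‖GRice ξ p v t q‖) := by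
    rw [summable_prod_of_nonneg (fun q => norm_nonneg _)]
    refine ⟨fun j => (hrowN j).summable, ?_⟩
    have h18 : (fun j => ∑' m, ‖GRice ξ p v t (j, m)‖) = DRice ξ p v ‖t‖ := by
      funext j
      exact (hrowN j).tsum_eq
    rwa [h18]
  have hGsum : Summable (GRice ξ p v t) := Summable.of_norm hGnormsum
  have hS : HasSum (GRice ξ p v t) (∑' q, GRice ξ p v t q) := hGsum.hasSum
  -- Part 1 : LHS
  have hinner : ∀ n : ℕ, HasSum
      (fun x : (Finset.HasAntidiagonal.antidiagonal n : Finset (ℕ × ℕ)) => GRice ξ p v t x)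
      (t^n * riceH n ξ p v) := by
    intro n
    have h19 := hasSum_fintype
      (fun x : (Finset.HasAntidiagonal.antidiagonal n : Finset (ℕ × ℕ)) => GRice ξ p v t (x : ℕ × ℕ))
    have h20 : ∑ x : (Finset.HasAntidiagonal.antidiagonal n : Finset (ℕ × ℕ)), GRice ξ p v t (x : ℕ × ℕ)
        = t^n * riceH n ξ p v := by
      rw [Finset.sum_coe_sort (Finset.HasAntidiagonal.antidiagonal n) (GRice ξ p v t)]
      rw [Finset.Nat.sum_antidiagonal_eq_sum_range_succ_mk (GRice ξ p v t) n]
      rw [riceH, Finset.mul_sum]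
      apply Finset.sum_congr rfl
      intro j hj
      have hjn : j ≤ n := by
        rw [Finset.mem_range] at hj
        omega
      exact GRice_term ξ p v t n j hjn
    rwa [h20] at h19
  have hsig : HasSum ((GRice ξ p v t) ∘ (Finset.HasAntidiagonal.sigmaAntidiagonalEquivProd (A := ℕ)))
      (∑' q, GRice ξ p v t q) :=
    (Finset.HasAntidiagonal.sigmaAntidiagonalEquivProd (A := ℕ)).hasSum_iff.2 hS
  have hLHS : HasSum (fun n => t^n * riceH n ξ p v) (∑' q, GRice ξ p v t q) :=
    HasSum.sigma hsig hinner
  -- Part 2 : RHS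
  have hfib : HasSum (fun j => cRice ξ p v j * ((2*j).factorial : ℂ) * t^j
      * (1/(1-t)^(2*j+1))) (∑' q, GRice ξ p v t q) :=
    HasSum.prod_fiberwise hS hrow
  have h21 : (fun j => cRice ξ p v j * ((2*j).factorial : ℂ) * t^j * (1/(1-t)^(2*j+1)))
      = fun j => (1-t)⁻¹ * (poch ξ j * poch (1/2) j / ((j.factorial : ℂ) * poch p j)
        * (-4 * v * t * ((1 - t) ^ 2)⁻¹)^j) := by
    funext j
    exact hyp_term ξ p v t j h1t (hppoch j)
  rw [h21] at hfib
  rw [hLHS.tsum_eq, ← hfib.tsum_eq, hyp, tsum_mul_left]
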